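/- Let N = N(Q_n, m, r) be an indecomposable quasi Q_n-filiform Lie algebra (N is not a direct sum of two nonzero ideals), and let T = {δ ∈ Der N : δ e_{s0} ∈ ℂ e_{s0} and δ e_{s1} ∈ ℂ e_{s1} for all 1 ≤ s ≤ m}. Then there exist derivations τ_0, τ_1, ..., τ_m ∈ T with τ_0 e_{s0} = 0 and τ_0 e_{s1} = e_{s1} for all s, and for 1 ≤ i ≤ m, τ_i e_{i0} = -2 e_{i0}, τ_i e_{i1} = (n-2) e_{i1}, and τ_i e_{s0} = τ_i e_{s1} = 0 for s ≠ i; moreover {τ_0, τ_1, ..., τ_m} is a basis of T, so dim T = m + 1. -/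

import Mathlib

open Finset

/-- A quasi `Qₙ`-filiform Lie algebra `N = N(Qₙ, m, r)`: a finite-dimensional complex
nilpotent Lie algebra which is the sum of `m` pairwise commuting subalgebras, each
isomorphic to the filiform Lie algebra `Qₙ` with basis `e i 0, …, e i n` satisfying the
`Qₙ` bracket relations, and such that
`{e 1 0, …, e 1 (n-1), …, e m 0, …, e m (n-1), e 1 n, …, e r n}` is a basis of `N`,
where `r = dim c^{n-1} N`. -/
structure QuasiQnFiliform (n m r : ℕ) (N : Type*) [LieRing N] [LieAlgebra ℂ N] : Type _ where
  /-- the distinguished vectors `e_{ij}`, for `1 ≤ i ≤ m`, `0 ≤ j ≤ n` -/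
  e : ℕ → ℕ → N
  /-- `N` is nilpotent -/
  nilpotent : LieRing.IsNilpotent N
  /-- `N` is finite-dimensional -/
  findim : FiniteDimensional ℂ N
  /-- `[e_{i0}, e_{ij}] = e_{i,j+1}` for `1 ≤ j ≤ n - 2` -/
  bracket_e0 : ∀ i j, 1 ≤ i → i ≤ m → 1 ≤ j → j ≤ n - 2 → ⁅e i 0, e i j⁆ = e i (j + 1)
  /-- `[e_{i0}, e_{i,n-1}] = 0` -/
  bracket_e0_top : ∀ i, 1 ≤ i → i ≤ m → ⁅e i 0, e i (n - 1)⁆ = 0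
  /-- `[e_{i0}, e_{in}] = 0` -/
  bracket_e0_n : ∀ i, 1 ≤ i → i ≤ m → ⁅e i 0, e i n⁆ = 0
  /-- `[e_{ij}, e_{i,n-j}] = (-1)^j e_{in}` for `1 ≤ j ≤ n - 1` -/
  bracket_pair : ∀ i j, 1 ≤ i → i ≤ m → 1 ≤ j → j ≤ n - 1 →
    ⁅e i j, e i (n - j)⁆ = ((-1 : ℂ)) ^ j • e i n
  /-- all remaining brackets inside a component vanish -/
  bracket_zero : ∀ i j k, 1 ≤ i → i ≤ m → 1 ≤ j → j ≤ n → 1 ≤ k → k ≤ n → j + k ≠ n →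
    ⁅e i j, e i k⁆ = 0
  /-- distinct components commute: `[N_i, N_{i'}] = 0` -/
  bracket_comm : ∀ i i' j j', 1 ≤ i → i ≤ m → 1 ≤ i' → i' ≤ m → i ≠ i' → j ≤ n → j' ≤ n →
    ⁅e i j, e i' j'⁆ = 0
  /-- `{e_{i0}, …, e_{in}}` is linearly independent (each `Nᵢ ≅ Qₙ` has it as a basis) -/
  indep_comp : ∀ i, 1 ≤ i → i ≤ m → LinearIndependent ℂ (fun j : Fin (n + 1) => e i (j : ℕ))
  /-- the distinguished family is linearly independent … -/
  basis_indep : LinearIndependent ℂ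
    (Sum.elim (fun p : Fin m × Fin n => e ((p.1 : ℕ) + 1) (p.2 : ℕ))
      (fun t : Fin r => e ((t : ℕ) + 1) n))
  /-- … and spans `N`, i.e. it is a basis of `N` (in particular `N = N₁ + ⋯ + N_m`) -/
  basis_span : Submodule.span ℂ (Set.range
    (Sum.elim (fun p : Fin m × Fin n => e ((p.1 : ℕ) + 1) (p.2 : ℕ))
      (fun t : Fin r => e ((t : ℕ) + 1) n))) = ⊤
  /-- `r = dim c^{n-1} N` -/
  rank_lcs : Module.finrank ℂ (LieModule.lowerCentralSeries ℂ N N (n - 1)) = r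

/-- The set `T = {δ ∈ Der N ∣ δ e_{s0} ∈ ℂ e_{s0}, δ e_{s1} ∈ ℂ e_{s1} for all s}`. -/
def torusSet (n m r : ℕ) {N : Type*} [LieRing N] [LieAlgebra ℂ N]
    (Q : QuasiQnFiliform n m r N) : Set (LieDerivation ℂ N N) :=
  {δ | ∀ s, 1 ≤ s → s ≤ m →
    δ (Q.e s 0) ∈ Submodule.span ℂ {Q.e s 0} ∧ δ (Q.e s 1) ∈ Submodule.span ℂ {Q.e s 1}}

namespace QuasiQnFiliform

variable {n m r : ℕ} {N : Type*} [LieRing N] [LieAlgebra ℂ N] (Q : QuasiQnFiliform n m r N)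

/-- the distinguished basis family -/
def fam : (Fin m × Fin n) ⊕ Fin r → N :=
  Sum.elim (fun p : Fin m × Fin n => Q.e ((p.1 : ℕ) + 1) (p.2 : ℕ))
    (fun t : Fin r => Q.e ((t : ℕ) + 1) n)

/-- the component of a basis index -/
def comp : (Fin m × Fin n) ⊕ Fin r → ℕ :=
  Sum.elim (fun p => (p.1 : ℕ) + 1) (fun t => (t : ℕ) + 1)

noncomputable def qBasis : Module.Basis ((Fin m × Fin n) ⊕ Fin r) ℂ N :=
  Module.Basis.mk Q.basis_indep (by rw [Q.basis_span])

@[simp] lemma qBasis_apply (k) : Q.qBasis k = Q.fam k := Module.Basis.mk_apply _ _ _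

lemma fam_inl (p : Fin m × Fin n) : Q.fam (Sum.inl p) = Q.e ((p.1 : ℕ) + 1) (p.2 : ℕ) := rfl
lemma fam_inr (t : Fin r) : Q.fam (Sum.inr t) = Q.e ((t : ℕ) + 1) n := rfl

lemma span_fam : Submodule.span ℂ (Set.range Q.fam) = ⊤ := Q.basis_span

lemma indep_vr : LinearIndependent ℂ (fun t : Fin r => Q.e ((t : ℕ) + 1) n) :=
  Q.basis_indep.comp Sum.inr Sum.inr_injective

/-- each `e s j`, `1 ≤ j ≤ n-1`, lies in `c^{j-1} N` -/
lemma e_mem_lcs (hn5 : 5 ≤ n) (s : ℕ) (hs1 : 1 ≤ s) (hsm : s ≤ m) :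
    ∀ j, 1 ≤ j → j ≤ n - 1 → Q.e s j ∈ LieModule.lowerCentralSeries ℂ N N (j - 1) := by
  intro j hj1
  induction j with
  | zero => omega
  | succ j ih =>
    intro hjn
    rcases Nat.eq_or_lt_of_le hj1 with h1 | h1
    · simpa [← h1] using LieSubmodule.mem_top _
    · have hj : 1 ≤ j := by omega
      have hmem := ih hj (by omega)
      have hb : Q.e s (j + 1) = ⁅Q.e s 0, Q.e s j⁆ := (Q.bracket_e0 s j hs1 hsm hj (by omega)).symm
      have : Q.e s (j+1) ∈ LieModule.lowerCentralSeries ℂ N N ((j-1) + 1) := by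
        rw [LieModule.lowerCentralSeries_succ, hb]
        exact LieSubmodule.lie_mem_lie (LieSubmodule.mem_top _) hmem
      simpa [show j + 1 - 1 = (j - 1) + 1 by omega] using this

lemma en_mem_lcs (hn5 : 5 ≤ n) (s : ℕ) (hs1 : 1 ≤ s) (hsm : s ≤ m) :
    Q.e s n ∈ LieModule.lowerCentralSeries ℂ N N (n - 1) := by
  have h1 : Q.e s (n-1) ∈ LieModule.lowerCentralSeries ℂ N N (n - 2) := by
    simpa [show n - 1 - 1 = n - 2 by omega] using Q.e_mem_lcs hn5 s hs1 hsm (n-1) (by omega) le_rfl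
  have hb := Q.bracket_pair s 1 hs1 hsm le_rfl (by omega)
  have hen : Q.e s n = -⁅Q.e s 1, Q.e s (n - 1)⁆ := by
    rw [hb]; simp
  rw [hen]
  rw [show n - 1 = (n-2) + 1 by omega] at h1 ⊢
  rw [LieModule.lowerCentralSeries_succ]
  exact neg_mem (LieSubmodule.lie_mem_lie (LieSubmodule.mem_top _) h1)


/-- the span of the `e (t+1) n`, `t : Fin r` -/
noncomputable def Vspan : Submodule ℂ N :=
  Submodule.span ℂ (Set.range fun t : Fin r => Q.e ((t : ℕ) + 1) n)

lemma en_mem_Vspan (hn5 : 5 ≤ n) (hrm : r ≤ m) (s : ℕ) (hs1 : 1 ≤ s) (hsm : s ≤ m) :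
    Q.e s n ∈ Q.Vspan := by
  haveI := Q.findim
  set W : Submodule ℂ N := (LieModule.lowerCentralSeries ℂ N N (n - 1) : LieSubmodule ℂ N N).toSubmodule with hW
  have hVW : Q.Vspan ≤ W := by
    rw [Vspan, Submodule.span_le]
    rintro x ⟨t, rfl⟩
    exact Q.en_mem_lcs hn5 ((t : ℕ) + 1) (by omega) (by omega : (t:ℕ)+1 ≤ m)
  have hrankW : Module.finrank ℂ W = r := Q.rank_lcs
  have hrankV : Module.finrank ℂ Q.Vspan = r := by
    rw [Vspan, finrank_span_eq_card Q.indep_vr, Fintype.card_fin]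
  have hVeqW : Q.Vspan = W := by
    apply Submodule.eq_of_le_of_finrank_le hVW
    rw [hrankW, hrankV]
  rw [hVeqW]
  exact Q.en_mem_lcs hn5 s hs1 hsm


/-- the diagonal linear map with eigenvalue `γ s j` on `e s j` (`j ≤ n-1`) and `w` on the `e t n` -/
noncomputable def diagMap (γ : ℕ → ℕ → ℂ) (w : ℂ) : N →ₗ[ℂ] N :=
  Q.qBasis.constr ℂ (fun k =>
    (Sum.elim (fun p : Fin m × Fin n => γ ((p.1 : ℕ) + 1) (p.2 : ℕ)) (fun _ => w) k) • Q.fam k)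

lemma diagMap_fam (γ : ℕ → ℕ → ℂ) (w : ℂ) (k) :
    Q.diagMap γ w (Q.fam k) =
      (Sum.elim (fun p : Fin m × Fin n => γ ((p.1 : ℕ) + 1) (p.2 : ℕ)) (fun _ => w) k) •
        Q.fam k := by
  rw [← Q.qBasis_apply, diagMap, Module.Basis.constr_basis, Q.qBasis_apply]

lemma diagMap_e (hn5 : 5 ≤ n) (γ : ℕ → ℕ → ℂ) (w : ℂ) (s j : ℕ)
    (hs1 : 1 ≤ s) (hsm : s ≤ m) (hj : j ≤ n - 1) :
    Q.diagMap γ w (Q.e s j) = γ s j • Q.e s j := by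
  have hf : Q.fam (Sum.inl (⟨s - 1, by omega⟩, ⟨j, by omega⟩)) = Q.e s j := by
    rw [fam_inl]
    simp only []
    rw [show s - 1 + 1 = s from by omega]
  rw [← hf, Q.diagMap_fam]
  simp only [Sum.elim_inl]
  rw [show s - 1 + 1 = s from by omega]

lemma diagMap_en (hn5 : 5 ≤ n) (hrm : r ≤ m) (γ : ℕ → ℕ → ℂ) (w : ℂ) (s : ℕ)
    (hs1 : 1 ≤ s) (hsm : s ≤ m) :
    Q.diagMap γ w (Q.e s n) = w • Q.e s n := by
  have hmem := Q.en_mem_Vspan hn5 hrm s hs1 hsm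
  have hall : ∀ x ∈ Q.Vspan, Q.diagMap γ w x = w • x := by
    intro x hx
    refine Submodule.span_induction ?_ ?_ ?_ ?_ hx
    · rintro y ⟨t, rfl⟩
      simpa [fam_inr] using Q.diagMap_fam γ w (Sum.inr t)
    · simp
    · intro a b _ _ ha hb; rw [map_add, ha, hb, smul_add]
    · intro z a _ ha; rw [map_smul, ha, smul_comm]
  exact hall _ hmem


lemma diag_leibniz (hn5 : 5 ≤ n) (hrm : r ≤ m) (γ : ℕ → ℕ → ℂ) (w : ℂ)
    (h1 : ∀ s j, 1 ≤ s → s ≤ m → 1 ≤ j → j ≤ n - 2 → γ s (j + 1) = γ s 0 + γ s j)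
    (h2 : ∀ s j, 1 ≤ s → s ≤ m → 1 ≤ j → j ≤ n - 1 → γ s j + γ s (n - j) = w) :
    ∀ a b : N, Q.diagMap γ w ⁅a, b⁆ =
      ⁅a, Q.diagMap γ w b⁆ - ⁅b, Q.diagMap γ w a⁆ := by
  set f := Q.diagMap γ w with hf
  -- the same-component case, first argument `e s 0`
  have hcase0 : ∀ s j', 1 ≤ s → s ≤ m → j' ≤ n - 1 →
      f ⁅Q.e s 0, Q.e s j'⁆ = (γ s 0 + γ s j') • ⁅Q.e s 0, Q.e s j'⁆ := by
    intro s j' hs1 hsm hj'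
    rcases Nat.eq_zero_or_pos j' with rfl | hj'1
    · simp
    · rcases Nat.lt_or_ge j' (n - 1) with hlt | hge
      · rw [Q.bracket_e0 s j' hs1 hsm hj'1 (by omega)]
        rw [Q.diagMap_e hn5 γ w s (j' + 1) hs1 hsm (by omega)]
        rw [h1 s j' hs1 hsm hj'1 (by omega)]
      · have hj'e : j' = n - 1 := by omega
        subst hj'e
        rw [Q.bracket_e0_top s hs1 hsm]
        simp
  -- same component, both indices in `[0, n-1]`
  have hsame : ∀ s j j', 1 ≤ s → s ≤ m → j ≤ n - 1 → j' ≤ n - 1 →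
      f ⁅Q.e s j, Q.e s j'⁆ = (γ s j + γ s j') • ⁅Q.e s j, Q.e s j'⁆ := by
    intro s j j' hs1 hsm hj hj'
    rcases Nat.eq_zero_or_pos j with rfl | hj1
    · exact hcase0 s j' hs1 hsm hj'
    rcases Nat.eq_zero_or_pos j' with rfl | hj'1
    · rw [← lie_skew (Q.e s j) (Q.e s 0), map_neg, hcase0 s j hs1 hsm hj, smul_neg,
        add_comm (γ s j) (γ s 0)]
    by_cases hjj : j + j' = n
    · have hb := Q.bracket_pair s j hs1 hsm hj1 (by omega)
      rw [show n - j = j' from by omega] at hb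
      rw [hb, map_smul, Q.diagMap_en hn5 hrm γ w s hs1 hsm]
      rw [smul_comm, ← h2 s j hs1 hsm hj1 (by omega), show n - j = j' from by omega]
    · rw [Q.bracket_zero s j j' hs1 hsm hj1 (by omega) hj'1 (by omega) hjj]
      simp
  -- mixed : `e s j` with `e s' n`
  have hmix : ∀ s j s', 1 ≤ s → s ≤ m → j ≤ n - 1 → 1 ≤ s' → s' ≤ m →
      ⁅Q.e s j, Q.e s' n⁆ = 0 := by
    intro s j s' hs1 hsm hj hs'1 hs'm
    by_cases hss : s = s'
    · subst hss
      rcases Nat.eq_zero_or_pos j with rfl | hj1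
      · exact Q.bracket_e0_n s hs1 hsm
      · exact Q.bracket_zero s j n hs1 hsm hj1 (by omega) (by omega) le_rfl (by omega)
    · exact Q.bracket_comm s s' j n hs1 hsm hs'1 hs'm hss (by omega) le_rfl
  -- the coefficient function
  set c : (Fin m × Fin n) ⊕ Fin r → ℂ :=
    Sum.elim (fun p : Fin m × Fin n => γ ((p.1 : ℕ) + 1) (p.2 : ℕ)) (fun _ => w) with hc
  -- the key identity on basis pairs
  have key : ∀ k l, f ⁅Q.fam k, Q.fam l⁆ = (c k + c l) • ⁅Q.fam k, Q.fam l⁆ := by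
    rintro (⟨sk, jk⟩ | tk) (⟨sl, jl⟩ | tl)
    · -- inl inl
      by_cases hs : (sk : ℕ) = (sl : ℕ)
      · have h := hsame ((sk : ℕ) + 1) (jk : ℕ) (jl : ℕ) (by omega) (by omega)
          (by omega) (by omega)
        rw [hs] at h
        simp only [fam_inl, hc, Sum.elim_inl, hs]
        exact h
      · rw [fam_inl, fam_inl,
          Q.bracket_comm ((sk : ℕ) + 1) ((sl : ℕ) + 1) (jk : ℕ) (jl : ℕ)
            (by omega) (by omega) (by omega) (by omega) (by omega) (by omega) (by omega)]
        simp
    · -- inl inr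
      rw [fam_inl, fam_inr,
        hmix ((sk : ℕ) + 1) (jk : ℕ) ((tl : ℕ) + 1) (by omega) (by omega) (by omega)
          (by omega) (by omega)]
      simp
    · -- inr inl
      rw [fam_inr, fam_inl, ← lie_skew,
        hmix ((sl : ℕ) + 1) (jl : ℕ) ((tk : ℕ) + 1) (by omega) (by omega) (by omega)
          (by omega) (by omega)]
      simp
    · -- inr inr
      rw [fam_inr, fam_inr]
      by_cases ht : (tk : ℕ) = (tl : ℕ)
      · rw [ht, Q.bracket_zero ((tl : ℕ) + 1) n n (by omega) (by omega) (by omega) le_rfl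
          (by omega) le_rfl (by omega)]
        simp
      · rw [Q.bracket_comm ((tk : ℕ) + 1) ((tl : ℕ) + 1) n n (by omega) (by omega)
          (by omega) (by omega) (by omega) le_rfl le_rfl]
        simp
  -- extend bilinearly : first argument a basis vector
  have key2 : ∀ k (b : N), f ⁅Q.fam k, b⁆ = ⁅Q.fam k, f b⁆ + ⁅f (Q.fam k), b⁆ := by
    intro k b
    have heq : f ∘ₗ LieAlgebra.ad ℂ N (Q.fam k) =
        LieAlgebra.ad ℂ N (Q.fam k) ∘ₗ f + LieAlgebra.ad ℂ N (f (Q.fam k)) := by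
      apply Q.qBasis.ext
      intro l
      simp only [LinearMap.comp_apply, LinearMap.add_apply, LieAlgebra.ad_apply, qBasis_apply]
      rw [key k l, hf, Q.diagMap_fam, Q.diagMap_fam, ← hc]
      rw [lie_smul, smul_lie, add_smul]
      abel
    simpa only [LinearMap.comp_apply, LinearMap.add_apply, LieAlgebra.ad_apply] using
      LinearMap.congr_fun heq b
  -- extend bilinearly : both arguments arbitrary
  have main : ∀ a b : N, f ⁅a, b⁆ = ⁅a, f b⁆ + ⁅f a, b⁆ := by
    intro a b
    have heq : f ∘ₗ (-LieAlgebra.ad ℂ N b) =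
        (-LieAlgebra.ad ℂ N (f b)) + (-LieAlgebra.ad ℂ N b) ∘ₗ f := by
      apply Q.qBasis.ext
      intro l
      simp only [LinearMap.comp_apply, LinearMap.add_apply, LinearMap.neg_apply,
        LieAlgebra.ad_apply, qBasis_apply, map_neg]
      rw [← lie_skew b (Q.fam l), map_neg, key2 l b]
      rw [← lie_skew b (f (Q.fam l)), ← lie_skew (f b) (Q.fam l)]
      abel
    have := LinearMap.congr_fun heq a
    simp only [LinearMap.comp_apply, LinearMap.add_apply, LinearMap.neg_apply,
      LieAlgebra.ad_apply, map_neg] at this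
    have h' : -f ⁅b, a⁆ = -⁅f b, a⁆ + -⁅b, f a⁆ := this
    rw [← lie_skew a b, map_neg, h']
    rw [← lie_skew a (f b), ← lie_skew (f a) b]
  intro a b
  rw [main a b, sub_eq_add_neg, lie_skew]


/-- the diagonal derivation -/
noncomputable def diagDer (hn5 : 5 ≤ n) (hrm : r ≤ m) (γ : ℕ → ℕ → ℂ) (w : ℂ)
    (h1 : ∀ s j, 1 ≤ s → s ≤ m → 1 ≤ j → j ≤ n - 2 → γ s (j + 1) = γ s 0 + γ s j)
    (h2 : ∀ s j, 1 ≤ s → s ≤ m → 1 ≤ j → j ≤ n - 1 → γ s j + γ s (n - j) = w) :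
    LieDerivation ℂ N N :=
  ⟨Q.diagMap γ w, Q.diag_leibniz hn5 hrm γ w h1 h2⟩

lemma diagDer_apply (hn5 : 5 ≤ n) (hrm : r ≤ m) (γ : ℕ → ℕ → ℂ) (w : ℂ) (h1) (h2) (x : N) :
    Q.diagDer hn5 hrm γ w h1 h2 x = Q.diagMap γ w x := rfl

/-- eigenvalue propagation for a derivation preserving the lines `ℂ e s 0` and `ℂ e s 1` -/
lemma eigen_e (hn5 : 5 ≤ n) (δ : LieDerivation ℂ N N) (s : ℕ) (hs1 : 1 ≤ s) (hsm : s ≤ m)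
    (a b : ℂ) (ha : δ (Q.e s 0) = a • Q.e s 0) (hb : δ (Q.e s 1) = b • Q.e s 1) :
    ∀ j, 1 ≤ j → j ≤ n - 1 → δ (Q.e s j) = (a * ((j : ℂ) - 1) + b) • Q.e s j := by
  intro j hj1 hj2
  induction j, hj1 using Nat.le_induction with
  | base => norm_num [hb]
  | succ j hj ih =>
    have hb' := Q.bracket_e0 s j hs1 hsm hj (by omega)
    have ihh := ih (by omega)
    rw [← hb', LieDerivation.apply_lie_eq_sub, ha, ihh, lie_smul, lie_smul, hb',
      ← lie_skew (Q.e s j) (Q.e s 0), hb']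
    push_cast
    module

lemma eigen_n (hn5 : 5 ≤ n) (δ : LieDerivation ℂ N N) (s : ℕ) (hs1 : 1 ≤ s) (hsm : s ≤ m)
    (a b : ℂ) (ha : δ (Q.e s 0) = a • Q.e s 0) (hb : δ (Q.e s 1) = b • Q.e s 1) :
    δ (Q.e s n) = (a * ((n : ℂ) - 2) + 2 * b) • Q.e s n := by
  have hl := Q.eigen_e hn5 δ s hs1 hsm a b ha hb (n - 1) (by omega) le_rfl
  have hcast : ((n - 1 : ℕ) : ℂ) = (n : ℂ) - 1 := by
    push_cast [Nat.cast_sub (by omega : 1 ≤ n)]; ring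
  rw [hcast] at hl
  have hb2 := Q.bracket_pair s 1 hs1 hsm le_rfl (by omega)
  have hδ := congrArg δ hb2
  rw [LieDerivation.apply_lie_eq_sub, hb, hl, lie_smul, lie_smul, hb2,
    ← lie_skew (Q.e s (n - 1)) (Q.e s 1), hb2, map_smul] at hδ
  have hfin : δ (Q.e s n) = (-1 : ℂ) • ((-1 : ℂ) ^ 1 • δ (Q.e s n)) := by
    rw [smul_smul]; norm_num
  rw [hfin, ← hδ]
  module


lemma comp_ge_one (k : (Fin m × Fin n) ⊕ Fin r) : 1 ≤ comp k := by
  rcases k with p | t <;> simp [comp] <;> omega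

lemma comp_le (hrm : r ≤ m) (k : (Fin m × Fin n) ⊕ Fin r) : comp k ≤ m := by
  rcases k with p | t <;> simp [comp] <;> omega

lemma e_eq_fam (s j : ℕ) (hs1 : 1 ≤ s) (hsm : s ≤ m) (hjn : j < n) :
    Q.e s j = Q.fam (Sum.inl (⟨s - 1, by omega⟩, ⟨j, hjn⟩)) := by
  rw [fam_inl]
  simp only []
  rw [show s - 1 + 1 = s from by omega]

lemma bracket_fam (hn5 : 5 ≤ n) (hrm : r ≤ m) (k l : (Fin m × Fin n) ⊕ Fin r) :
    ⁅Q.fam k, Q.fam l⁆ = 0 ∨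
      (comp k = comp l ∧ ∃ (z : ℂ) (j : ℕ), 2 ≤ j ∧ j ≤ n ∧
        ⁅Q.fam k, Q.fam l⁆ = z • Q.e (comp k) j) := by
  have hmix : ∀ s j s', 1 ≤ s → s ≤ m → j ≤ n - 1 → 1 ≤ s' → s' ≤ m →
      ⁅Q.e s j, Q.e s' n⁆ = 0 := by
    intro s j s' hs1 hsm hj hs'1 hs'm
    by_cases hss : s = s'
    · subst hss
      rcases Nat.eq_zero_or_pos j with rfl | hj1
      · exact Q.bracket_e0_n s hs1 hsm
      · exact Q.bracket_zero s j n hs1 hsm hj1 (by omega) (by omega) le_rfl (by omega)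
    · exact Q.bracket_comm s s' j n hs1 hsm hs'1 hs'm hss (by omega) le_rfl
  rcases k with ⟨sk, jk⟩ | tk <;> rcases l with ⟨sl, jl⟩ | tl
  · -- inl inl
    by_cases hs : (sk : ℕ) = (sl : ℕ)
    · right
      constructor
      · simp [comp, hs]
      · simp only [comp, Sum.elim_inl, fam_inl, hs]
        set s := (sl : ℕ) + 1 with hsdef
        have hs1 : 1 ≤ s := by omega
        have hsm : s ≤ m := by omega
        rcases Nat.eq_zero_or_pos (jk : ℕ) with hk0 | hk1
        · rcases Nat.eq_zero_or_pos (jl : ℕ) with hl0 | hl1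
          · exact ⟨0, 2, le_rfl, by omega, by rw [hk0, hl0]; simp⟩
          · rcases Nat.lt_or_ge (jl : ℕ) (n - 1) with hlt | hge
            · refine ⟨1, (jl : ℕ) + 1, by omega, by omega, ?_⟩
              rw [hk0, Q.bracket_e0 s (jl : ℕ) hs1 hsm hl1 (by omega), one_smul]
            · refine ⟨0, 2, le_rfl, by omega, ?_⟩
              rw [hk0, show (jl : ℕ) = n - 1 from by omega, Q.bracket_e0_top s hs1 hsm]
              simp
        · rcases Nat.eq_zero_or_pos (jl : ℕ) with hl0 | hl1
          · rcases Nat.lt_or_ge (jk : ℕ) (n - 1) with hlt | hge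
            · refine ⟨-1, (jk : ℕ) + 1, by omega, by omega, ?_⟩
              rw [hl0, ← lie_skew (Q.e s (jk : ℕ)) (Q.e s 0),
                Q.bracket_e0 s (jk : ℕ) hs1 hsm hk1 (by omega)]
              simp
            · refine ⟨0, 2, le_rfl, by omega, ?_⟩
              rw [hl0, ← lie_skew (Q.e s (jk : ℕ)) (Q.e s 0),
                show (jk : ℕ) = n - 1 from by omega, Q.bracket_e0_top s hs1 hsm]
              simp
          · by_cases hjj : (jk : ℕ) + (jl : ℕ) = n
            · refine ⟨(-1 : ℂ) ^ (jk : ℕ), n, by omega, le_rfl, ?_⟩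
              have hb := Q.bracket_pair s (jk : ℕ) hs1 hsm hk1 (by omega)
              rw [show n - (jk : ℕ) = (jl : ℕ) from by omega] at hb
              exact hb
            · refine ⟨0, 2, le_rfl, by omega, ?_⟩
              rw [Q.bracket_zero s (jk : ℕ) (jl : ℕ) hs1 hsm hk1 (by omega) hl1 (by omega) hjj]
              simp
    · left
      rw [fam_inl, fam_inl]
      exact Q.bracket_comm ((sk : ℕ) + 1) ((sl : ℕ) + 1) (jk : ℕ) (jl : ℕ)
        (by omega) (by omega) (by omega) (by omega) (by omega) (by omega) (by omega)
  · left
    rw [fam_inl, fam_inr]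
    exact hmix ((sk : ℕ) + 1) (jk : ℕ) ((tl : ℕ) + 1) (by omega) (by omega) (by omega)
      (by omega) (by omega)
  · left
    rw [fam_inr, fam_inl, ← lie_skew,
      hmix ((sl : ℕ) + 1) (jl : ℕ) ((tk : ℕ) + 1) (by omega) (by omega) (by omega)
        (by omega) (by omega)]
    simp
  · left
    rw [fam_inr, fam_inr]
    by_cases ht : (tk : ℕ) = (tl : ℕ)
    · rw [ht]
      exact Q.bracket_zero ((tl : ℕ) + 1) n n (by omega) (by omega) (by omega) le_rfl
        (by omega) le_rfl (by omega)
    · exact Q.bracket_comm ((tk : ℕ) + 1) ((tl : ℕ) + 1) n n (by omega) (by omega)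
        (by omega) (by omega) (by omega) le_rfl le_rfl


lemma mu_eq (hn5 : 5 ≤ n) (hm : 1 ≤ m) (hrm : r ≤ m)
    (hind : ¬ ∃ I J : LieIdeal ℂ N, I ≠ ⊥ ∧ J ≠ ⊥ ∧ I ⊓ J = ⊥ ∧ I ⊔ J = ⊤)
    (δ : LieDerivation ℂ N N) (a b : ℕ → ℂ)
    (ha : ∀ s, 1 ≤ s → s ≤ m → δ (Q.e s 0) = a s • Q.e s 0)
    (hb : ∀ s, 1 ≤ s → s ≤ m → δ (Q.e s 1) = b s • Q.e s 1) :
    ∀ s, 1 ≤ s → s ≤ m →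
      a s * ((n : ℂ) - 2) + 2 * b s = a 1 * ((n : ℂ) - 2) + 2 * b 1 := by
  classical
  set μ : ℕ → ℂ := fun s => a s * ((n : ℂ) - 2) + 2 * b s with hμ
  by_contra hcon
  push_neg at hcon
  obtain ⟨s₀, hs₀1, hs₀m, hs₀⟩ := hcon
  have heig : ∀ s, 1 ≤ s → s ≤ m → δ (Q.e s n) = μ s • Q.e s n := fun s h1 h2 =>
    Q.eigen_n hn5 δ s h1 h2 (a s) (b s) (ha s h1 h2) (hb s h1 h2)
  -- representation of `e s n` over the `e (t+1) n`
  have hrep : ∀ s, 1 ≤ s → s ≤ m → ∃ c : Fin r → ℂ,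
      Q.e s n = ∑ t : Fin r, c t • Q.e ((t : ℕ) + 1) n ∧
      ∀ t : Fin r, c t ≠ 0 → μ ((t : ℕ) + 1) = μ s := by
    intro s h1 h2
    let bV : Module.Basis (Fin r) ℂ Q.Vspan := Module.Basis.span Q.indep_vr
    let x : Q.Vspan := ⟨Q.e s n, Q.en_mem_Vspan hn5 hrm s h1 h2⟩
    set c : Fin r → ℂ := fun t => bV.repr x t with hcdef
    have hsum : Q.e s n = ∑ t : Fin r, c t • Q.e ((t : ℕ) + 1) n := by
      have hx := bV.sum_repr x
      have : ((∑ t : Fin r, c t • bV t : Q.Vspan) : N) = ((x : Q.Vspan) : N) := by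
        exact_mod_cast congrArg (Subtype.val) hx
      rw [Submodule.coe_sum] at this
      have hbv : ∀ t : Fin r, ((bV t : Q.Vspan) : N) = Q.e ((t : ℕ) + 1) n := fun t =>
        congrArg Subtype.val (Module.Basis.span_apply Q.indep_vr t)
      simp only [SetLike.val_smul, hbv] at this
      exact this.symm
    refine ⟨c, hsum, ?_⟩
    intro t hct
    have hδ1 : μ s • Q.e s n = ∑ t : Fin r, (c t * μ ((t : ℕ) + 1)) • Q.e ((t : ℕ) + 1) n := by
      rw [← heig s h1 h2]
      conv_lhs => rw [hsum]
      rw [map_sum]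
      refine Finset.sum_congr rfl fun t' _ => ?_
      rw [map_smul, heig ((t' : ℕ) + 1) (by omega) (by omega), smul_smul]
    have hδ2 : μ s • Q.e s n = ∑ t : Fin r, (μ s * c t) • Q.e ((t : ℕ) + 1) n := by
      conv_lhs => rw [hsum]
      rw [Finset.smul_sum]
      refine Finset.sum_congr rfl fun t' _ => ?_
      rw [smul_smul]
    have hzero : ∑ t : Fin r, ((μ s * c t - c t * μ ((t : ℕ) + 1)) • Q.e ((t : ℕ) + 1) n) = 0 := by
      simp only [sub_smul]
      rw [Finset.sum_sub_distrib, ← hδ1, ← hδ2, sub_self]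
    have hall := Fintype.linearIndependent_iff.mp Q.indep_vr _ hzero t
    have hfac : c t * (μ s - μ ((t : ℕ) + 1)) = 0 := by linear_combination hall
    rcases mul_eq_zero.mp hfac with h | h
    · exact absurd h hct
    · exact (sub_eq_zero.mp h).symm
  -- the two ideals
  set G : ((Fin m × Fin n) ⊕ Fin r) → Prop := fun k => μ (comp k) = μ 1 with hG
  -- generic ideal construction from a component predicate
  have hideal : ∀ (C : ((Fin m × Fin n) ⊕ Fin r) → Prop),
      (∀ k l, comp k = comp l → C l → C k) →
      (∀ s, 1 ≤ s → s ≤ m → (∃ k, comp k = s ∧ C k) →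
        Q.e s n ∈ Submodule.span ℂ (Q.fam '' {k | C k})) →
      ∀ (x y : N), y ∈ Submodule.span ℂ (Q.fam '' {k | C k}) →
        ⁅x, y⁆ ∈ Submodule.span ℂ (Q.fam '' {k | C k}) := by
    intro C hCcomp hen x y hy
    set S := Submodule.span ℂ (Q.fam '' {k | C k}) with hS
    have hkl : ∀ k l, C l → ⁅Q.fam k, Q.fam l⁆ ∈ S := by
      intro k l hCl
      rcases Q.bracket_fam hn5 hrm k l with h0 | ⟨hcc, z, j, hj2, hjn, hzj⟩
      · rw [h0]; exact zero_mem _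
      · rw [hzj]
        refine Submodule.smul_mem _ _ ?_
        rcases Nat.lt_or_ge j n with hlt | hge
        · rw [Q.e_eq_fam (comp k) j (comp_ge_one k) (comp_le hrm k) hlt]
          refine Submodule.subset_span ⟨_, ?_, rfl⟩
          have hcomp : comp (Sum.inl ((⟨comp k - 1, by
              have := comp_le hrm k; have := comp_ge_one k; omega⟩ : Fin m),
              (⟨j, hlt⟩ : Fin n)) : (Fin m × Fin n) ⊕ Fin r) = comp k := by
            show comp k - 1 + 1 = comp k
            have h1 := comp_ge_one k
            omega
          exact Set.mem_setOf.mpr (hCcomp _ l (by rw [hcomp, hcc]) hCl)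
        · have hje : j = n := by omega
          subst hje
          exact hen (comp k) (comp_ge_one k) (comp_le hrm k)
            ⟨l, hcc.symm, hCl⟩
    have hxgen : ∀ (x : N) l, C l → ⁅x, Q.fam l⁆ ∈ S := by
      intro x l hCl
      have hxtop : x ∈ Submodule.span ℂ (Set.range Q.fam) := by
        rw [Q.span_fam]; trivial
      refine Submodule.span_induction ?_ ?_ ?_ ?_ hxtop
      · rintro y' ⟨k, rfl⟩
        exact hkl k l hCl
      · rw [zero_lie]; exact zero_mem _
      · intro u v _ _ hu hv; rw [add_lie]; exact add_mem hu hv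
      · intro z u _ hu; rw [smul_lie]; exact Submodule.smul_mem _ _ hu
    refine Submodule.span_induction ?_ ?_ ?_ ?_ hy
    · rintro y' ⟨l, hl, rfl⟩
      exact hxgen x l hl
    · rw [lie_zero]; exact zero_mem _
    · intro u v _ _ hu hv; rw [lie_add]; exact add_mem hu hv
    · intro z u _ hu; rw [lie_smul]; exact Submodule.smul_mem _ _ hu
  -- membership of the `e s n` in the spans
  have hen : ∀ (C : ((Fin m × Fin n) ⊕ Fin r) → Prop),
      (∀ t : Fin r, (μ ((t : ℕ) + 1) = μ 1 → ∀ hk : G (Sum.inr t), True) → True) → True := fun _ _ => trivial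
  clear hen
  have henG : ∀ s, 1 ≤ s → s ≤ m → μ s = μ 1 →
      Q.e s n ∈ Submodule.span ℂ (Q.fam '' {k | G k}) := by
    intro s h1 h2 hμs
    obtain ⟨c, hsum, hvan⟩ := hrep s h1 h2
    rw [hsum]
    refine Submodule.sum_mem _ fun t _ => ?_
    by_cases hc : c t = 0
    · rw [hc, zero_smul]; exact zero_mem _
    · refine Submodule.smul_mem _ _ (Submodule.subset_span ⟨Sum.inr t, ?_, rfl⟩)
      show μ (comp (Sum.inr t : (Fin m × Fin n) ⊕ Fin r)) = μ 1
      show μ ((t : ℕ) + 1) = μ 1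
      rw [hvan t hc, hμs]
  have henG' : ∀ s, 1 ≤ s → s ≤ m → ¬ (μ s = μ 1) →
      Q.e s n ∈ Submodule.span ℂ (Q.fam '' {k | ¬ G k}) := by
    intro s h1 h2 hμs
    obtain ⟨c, hsum, hvan⟩ := hrep s h1 h2
    rw [hsum]
    refine Submodule.sum_mem _ fun t _ => ?_
    by_cases hc : c t = 0
    · rw [hc, zero_smul]; exact zero_mem _
    · refine Submodule.smul_mem _ _ (Submodule.subset_span ⟨Sum.inr t, ?_, rfl⟩)
      show ¬ (μ (comp (Sum.inr t : (Fin m × Fin n) ⊕ Fin r)) = μ 1)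
      show ¬ (μ ((t : ℕ) + 1) = μ 1)
      rw [hvan t hc]
      exact hμs
  -- build the Lie ideals
  let I₁ : LieIdeal ℂ N :=
    { toSubmodule := Submodule.span ℂ (Q.fam '' {k | G k})
      lie_mem := fun {x y} hy => hideal G
        (fun k l hc hl => by
          show μ (comp k) = μ 1
          rw [hc]; exact hl)
        (fun s h1 h2 ⟨k, hk, hCk⟩ => henG s h1 h2 (by rw [← hk]; exact hCk))
        x y hy }
  let I₂ : LieIdeal ℂ N :=
    { toSubmodule := Submodule.span ℂ (Q.fam '' {k | ¬ G k})
      lie_mem := fun {x y} hy => hideal (fun k => ¬ G k)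
        (fun k l hc hl => by
          show ¬ (μ (comp k) = μ 1)
          rw [hc]; exact hl)
        (fun s h1 h2 ⟨k, hk, hCk⟩ => henG' s h1 h2 (by rw [← hk]; exact hCk))
        x y hy }
  apply hind
  refine ⟨I₁, I₂, ?_, ?_, ?_, ?_⟩
  · -- I₁ ≠ ⊥ : contains e 1 0
    intro hbot
    have hmem : Q.fam (Sum.inl ((⟨0, by omega⟩ : Fin m), (⟨0, by omega⟩ : Fin n))) ∈ I₁ :=
      Submodule.subset_span ⟨_, by show μ _ = μ 1; rfl, rfl⟩
    rw [hbot, LieSubmodule.mem_bot] at hmem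
    exact Q.basis_indep.ne_zero _ hmem
  · -- I₂ ≠ ⊥ : contains e s₀ 0
    intro hbot
    have hmem : Q.fam (Sum.inl ((⟨s₀ - 1, by omega⟩ : Fin m), (⟨0, by omega⟩ : Fin n))) ∈ I₂ := by
      refine Submodule.subset_span ⟨_, ?_, rfl⟩
      show ¬ (μ (comp (Sum.inl ((⟨s₀ - 1, by omega⟩ : Fin m), (⟨0, by omega⟩ : Fin n)) :
        (Fin m × Fin n) ⊕ Fin r)) = μ 1)
      have : comp (Sum.inl ((⟨s₀ - 1, by omega⟩ : Fin m), (⟨0, by omega⟩ : Fin n)) :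
          (Fin m × Fin n) ⊕ Fin r) = s₀ := by
        simp only [comp, Sum.elim_inl]; omega
      rw [this]
      exact hs₀
    rw [hbot, LieSubmodule.mem_bot] at hmem
    exact Q.basis_indep.ne_zero _ hmem
  · -- I₁ ⊓ I₂ = ⊥
    have hdisj : Disjoint (Submodule.span ℂ (Q.fam '' {k | G k}))
        (Submodule.span ℂ (Q.fam '' {k | ¬ G k})) := by
      have hele : ∀ k, Q.fam k = Q.qBasis k := fun k => (Q.qBasis_apply k).symm
      have : Q.fam '' {k | G k} = Q.qBasis '' {k | G k} := by
        apply Set.image_congr; intro k _; exact hele k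
      rw [this]
      have : Q.fam '' {k | ¬ G k} = Q.qBasis '' {k | ¬ G k} := by
        apply Set.image_congr; intro k _; exact hele k
      rw [this]
      exact (Q.qBasis.linearIndependent).disjoint_span_image (by
        rw [Set.disjoint_left]; intro k hk hk'; exact hk' hk)
    rw [← LieSubmodule.toSubmodule_inj, LieSubmodule.inf_toSubmodule,
      LieSubmodule.bot_toSubmodule]
    exact disjoint_iff.mp hdisj
  · -- I₁ ⊔ I₂ = ⊤
    rw [← LieSubmodule.toSubmodule_inj, LieSubmodule.sup_toSubmodule,
      LieSubmodule.top_toSubmodule]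
    show Submodule.span ℂ (Q.fam '' {k | G k}) ⊔ Submodule.span ℂ (Q.fam '' {k | ¬ G k}) = ⊤
    rw [← Submodule.span_union, ← Set.image_union]
    have : ({k | G k} ∪ {k | ¬ G k}) = Set.univ := by
      ext k; simp [em]
    rw [this, Set.image_univ, Q.span_fam]


lemma vanish (hn5 : 5 ≤ n) (hrm : r ≤ m) (δ : LieDerivation ℂ N N)
    (h0 : ∀ s, 1 ≤ s → s ≤ m → δ (Q.e s 0) = 0 ∧ δ (Q.e s 1) = 0) :
    ∀ x : N, δ x = 0 := by
  have hfam : ∀ k, δ (Q.fam k) = 0 := by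
    rintro (⟨s, j⟩ | t)
    · rw [fam_inl]
      have hs1 : 1 ≤ (s : ℕ) + 1 := by omega
      have hsm : (s : ℕ) + 1 ≤ m := by omega
      have ha : δ (Q.e ((s : ℕ) + 1) 0) = (0 : ℂ) • Q.e ((s : ℕ) + 1) 0 := by
        rw [(h0 _ hs1 hsm).1, zero_smul]
      have hb : δ (Q.e ((s : ℕ) + 1) 1) = (0 : ℂ) • Q.e ((s : ℕ) + 1) 1 := by
        rw [(h0 _ hs1 hsm).2, zero_smul]
      rcases Nat.eq_zero_or_pos (j : ℕ) with hj0 | hj1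
      · rw [hj0]; exact (h0 _ hs1 hsm).1
      · rw [Q.eigen_e hn5 δ ((s : ℕ) + 1) hs1 hsm 0 0 ha hb (j : ℕ) hj1 (by omega)]
        simp
    · rw [fam_inr]
      have hs1 : 1 ≤ (t : ℕ) + 1 := by omega
      have hsm : (t : ℕ) + 1 ≤ m := by omega
      have ha : δ (Q.e ((t : ℕ) + 1) 0) = (0 : ℂ) • Q.e ((t : ℕ) + 1) 0 := by
        rw [(h0 _ hs1 hsm).1, zero_smul]
      have hb : δ (Q.e ((t : ℕ) + 1) 1) = (0 : ℂ) • Q.e ((t : ℕ) + 1) 1 := by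
        rw [(h0 _ hs1 hsm).2, zero_smul]
      rw [Q.eigen_n hn5 δ ((t : ℕ) + 1) hs1 hsm 0 0 ha hb]
      simp
  intro x
  have hx : x ∈ Submodule.span ℂ (Set.range Q.fam) := by rw [Q.span_fam]; trivial
  refine Submodule.span_induction ?_ ?_ ?_ ?_ hx
  · rintro y ⟨k, rfl⟩; exact hfam k
  · exact map_zero δ
  · intro u v _ _ hu hv; rw [map_add, hu, hv, add_zero]
  · intro z u _ hu; rw [map_smul, hu, smul_zero]


/-- evaluation of a derivation at a point, as a linear map -/
def evalAt {N : Type*} [LieRing N] [LieAlgebra ℂ N] (x : N) :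
    LieDerivation ℂ N N →ₗ[ℂ] N where
  toFun δ := δ x
  map_add' δ1 δ2 := rfl
  map_smul' c δ := rfl

end QuasiQnFiliform

/-- **Lemma 2.2.** If `N = N(Qₙ, m, r)` is indecomposable, then `T` is an `(m+1)`-dimensional
subspace of `Der N`, with basis `τ₀, τ₁, …, τ_m` where `τ₀ e_{s0} = 0`, `τ₀ e_{s1} = e_{s1}`
for all `s`, and for `1 ≤ i ≤ m`, `τᵢ e_{i0} = -2 e_{i0}`, `τᵢ e_{i1} = (n-2) e_{i1}` and
`τᵢ e_{s0} = τᵢ e_{s1} = 0` for `s ≠ i`. -/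
theorem torus_basis
    (n d m r : ℕ) (hn : n = 2 * d + 1) (hd : 2 ≤ d)
    (hm : 1 ≤ m) (hr : 1 ≤ r) (hrm : r ≤ m)
    (N : Type*) [LieRing N] [LieAlgebra ℂ N] (Q : QuasiQnFiliform n m r N)
    (hind : ¬ ∃ I J : LieIdeal ℂ N, I ≠ ⊥ ∧ J ≠ ⊥ ∧ I ⊓ J = ⊥ ∧ I ⊔ J = ⊤) :
    ∃ Tsub : Submodule ℂ (LieDerivation ℂ N N),
      (Tsub : Set (LieDerivation ℂ N N)) = torusSet n m r Q ∧
      ∃ τ : ℕ → LieDerivation ℂ N N,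
        (∀ i, i ≤ m → τ i ∈ Tsub) ∧
        (∀ s, 1 ≤ s → s ≤ m → τ 0 (Q.e s 0) = 0 ∧ τ 0 (Q.e s 1) = Q.e s 1) ∧
        (∀ i, 1 ≤ i → i ≤ m →
          τ i (Q.e i 0) = (-2 : ℂ) • Q.e i 0 ∧
          τ i (Q.e i 1) = (((n - 2 : ℕ) : ℂ)) • Q.e i 1 ∧
          ∀ s, 1 ≤ s → s ≤ m → s ≠ i → τ i (Q.e s 0) = 0 ∧ τ i (Q.e s 1) = 0) ∧
        (∃ bT : Module.Basis (Fin (m + 1)) ℂ Tsub, ∀ i : Fin (m + 1),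
          (bT i : LieDerivation ℂ N N) = τ (i : ℕ)) ∧
        Module.finrank ℂ Tsub = m + 1 := by
  classical
  have hn5 : 5 ≤ n := by omega
  -- the submodule T
  set TS : Submodule ℂ (LieDerivation ℂ N N) :=
    { carrier := torusSet n m r Q
      add_mem' := by
        intro δ1 δ2 h1 h2 s hs1 hsm
        exact ⟨by rw [LieDerivation.add_apply]
                  exact add_mem ((h1 s hs1 hsm).1) ((h2 s hs1 hsm).1),
               by rw [LieDerivation.add_apply]
                  exact add_mem ((h1 s hs1 hsm).2) ((h2 s hs1 hsm).2)⟩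
      zero_mem' := by
        intro s hs1 hsm
        constructor <;> simp
      smul_mem' := by
        intro c δ h s hs1 hsm
        exact ⟨by rw [LieDerivation.smul_apply]
                  exact Submodule.smul_mem _ _ ((h s hs1 hsm).1),
               by rw [LieDerivation.smul_apply]
                  exact Submodule.smul_mem _ _ ((h s hs1 hsm).2)⟩ } with hTS
  have hmemTS : ∀ (δ : LieDerivation ℂ N N), δ ∈ TS ↔ δ ∈ torusSet n m r Q := fun δ => Iff.rfl
  -- the derivations
  set γ₀ : ℕ → ℕ → ℂ := fun _ j => if j = 0 then 0 else 1 with hγ₀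
  have h1₀ : ∀ s j, 1 ≤ s → s ≤ m → 1 ≤ j → j ≤ n - 2 → γ₀ s (j + 1) = γ₀ s 0 + γ₀ s j := by
    intro s j _ _ hj1 _
    simp only [hγ₀]
    rw [if_neg (by omega : ¬ j + 1 = 0), if_neg (by omega : ¬ j = 0)]
    norm_num
  have h2₀ : ∀ s j, 1 ≤ s → s ≤ m → 1 ≤ j → j ≤ n - 1 → γ₀ s j + γ₀ s (n - j) = 2 := by
    intro s j _ _ hj1 hj2
    have : j ≠ 0 := by omega
    have : n - j ≠ 0 := by omega
    simp [hγ₀, ‹j ≠ 0›, ‹n - j ≠ 0›]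
    norm_num
  set t0 : LieDerivation ℂ N N := Q.diagDer hn5 hrm γ₀ 2 h1₀ h2₀ with ht0
  set γi : ℕ → ℕ → ℕ → ℂ := fun i s j =>
    if s = i then (if j = 0 then -2 else (n : ℂ) - 2 * (j : ℂ)) else 0 with hγi
  have h1i : ∀ i, ∀ s j, 1 ≤ s → s ≤ m → 1 ≤ j → j ≤ n - 2 →
      γi i s (j + 1) = γi i s 0 + γi i s j := by
    intro i s j _ _ hj1 _
    by_cases hsi : s = i
    · simp only [hγi, hsi, if_pos rfl, (by omega : j + 1 ≠ 0), if_neg (by omega : ¬ j + 1 = 0),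
        if_pos rfl, if_neg (by omega : ¬ j = 0)]
      push_cast
      ring
    · simp [hγi, hsi]
  have h2i : ∀ i, ∀ s j, 1 ≤ s → s ≤ m → 1 ≤ j → j ≤ n - 1 →
      γi i s j + γi i s (n - j) = 0 := by
    intro i s j _ _ hj1 hj2
    by_cases hsi : s = i
    · simp only [hγi, hsi, if_pos rfl, if_neg (by omega : ¬ j = 0),
        if_neg (by omega : ¬ n - j = 0)]
      have hcast : ((n - j : ℕ) : ℂ) = (n : ℂ) - (j : ℂ) := by
        push_cast [Nat.cast_sub (by omega : j ≤ n)]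
        ring
      rw [hcast]
      ring
    · simp [hγi, hsi]
  set ti : ℕ → LieDerivation ℂ N N := fun i =>
    Q.diagDer hn5 hrm (γi i) 0 (h1i i) (h2i i) with hti
  set τ : ℕ → LieDerivation ℂ N N := fun i => if i = 0 then t0 else ti i with hτ
  -- value lemmas
  have hval0 : ∀ s j, 1 ≤ s → s ≤ m → j ≤ n - 1 → τ 0 (Q.e s j) = γ₀ s j • Q.e s j := by
    intro s j hs1 hsm hj
    show (if (0 : ℕ) = 0 then t0 else ti 0) (Q.e s j) = _
    rw [if_pos rfl, ht0, Q.diagDer_apply, Q.diagMap_e hn5 γ₀ 2 s j hs1 hsm hj]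
  have hvali : ∀ i s j, i ≠ 0 → 1 ≤ s → s ≤ m → j ≤ n - 1 →
      τ i (Q.e s j) = γi i s j • Q.e s j := by
    intro i s j hi0 hs1 hsm hj
    show (if i = 0 then t0 else ti i) (Q.e s j) = _
    rw [if_neg hi0, hti, Q.diagDer_apply, Q.diagMap_e hn5 (γi i) 0 s j hs1 hsm hj]
  have hγz : ∀ i' s' j', s' ≠ i' → γi i' s' j' = 0 := fun i' s' j' hne => by
    rw [hγi]; exact if_neg hne
  -- membership of the τ i in T
  have hmemτ : ∀ i, i ≤ m → τ i ∈ torusSet n m r Q := by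
    intro i him s hs1 hsm
    by_cases hi0 : i = 0
    · subst hi0
      constructor
      · rw [hval0 s 0 hs1 hsm (by omega)]
        exact Submodule.smul_mem _ _ (Submodule.mem_span_singleton_self _)
      · rw [hval0 s 1 hs1 hsm (by omega)]
        exact Submodule.smul_mem _ _ (Submodule.mem_span_singleton_self _)
    · constructor
      · rw [hvali i s 0 hi0 hs1 hsm (by omega)]
        exact Submodule.smul_mem _ _ (Submodule.mem_span_singleton_self _)
      · rw [hvali i s 1 hi0 hs1 hsm (by omega)]
        exact Submodule.smul_mem _ _ (Submodule.mem_span_singleton_self _)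
  -- nonvanishing of basis vectors
  have hne0 : ∀ s, 1 ≤ s → s ≤ m → Q.e s 0 ≠ 0 := by
    intro s h1 h2
    have := Q.basis_indep.ne_zero
      (Sum.inl ((⟨s - 1, by omega⟩ : Fin m), (⟨0, by omega⟩ : Fin n)))
    simpa [show s - 1 + 1 = s from by omega] using this
  have hne11 : Q.e 1 1 ≠ 0 := by
    have := Q.basis_indep.ne_zero
      (Sum.inl ((⟨0, by omega⟩ : Fin m), (⟨1, by omega⟩ : Fin n)))
    simpa using this
  refine ⟨TS, rfl, τ, fun i him => (hmemTS _).mpr (hmemτ i him), ?_, ?_, ?_⟩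
  · -- values of τ 0
    intro s hs1 hsm
    constructor
    · rw [hval0 s 0 hs1 hsm (by omega)]
      simp [hγ₀]
    · rw [hval0 s 1 hs1 hsm (by omega)]
      simp [hγ₀]
  · -- values of τ i
    intro i hi1 him
    have hi0 : i ≠ 0 := by omega
    refine ⟨?_, ?_, ?_⟩
    · rw [hvali i i 0 hi0 hi1 him (by omega)]
      simp [hγi]
    · rw [hvali i i 1 hi0 hi1 him (by omega)]
      have : γi i i 1 = ((n - 2 : ℕ) : ℂ) := by
        simp only [hγi, if_pos rfl, if_neg (by omega : ¬ (1 : ℕ) = 0)]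
        push_cast [Nat.cast_sub (by omega : 2 ≤ n)]
        ring
      rw [this]
    · intro s hs1 hsm hsi
      constructor
      · rw [hvali i s 0 hi0 hs1 hsm (by omega)]
        simp [hγi, hsi]
      · rw [hvali i s 1 hi0 hs1 hsm (by omega)]
        simp [hγi, hsi]
  · -- the basis τ'' and the dimension
    -- the family inside TS
    have hτTS : ∀ i : Fin (m + 1), τ (i : ℕ) ∈ TS := fun i =>
      (hmemTS _).mpr (hmemτ (i : ℕ) (by omega))
    set τ'' : Fin (m + 1) → TS := fun i => ⟨τ (i : ℕ), hτTS i⟩ with hτ''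
    -- spanning property
    have hspan : ∀ δ : LieDerivation ℂ N N, δ ∈ torusSet n m r Q →
        ∃ coef : Fin (m + 1) → ℂ, δ = ∑ i : Fin (m + 1), coef i • τ (i : ℕ) := by
      intro δ hδ
      have hex : ∀ s : ℕ, ∃ ab : ℂ × ℂ, (1 ≤ s → s ≤ m →
          δ (Q.e s 0) = ab.1 • Q.e s 0 ∧ δ (Q.e s 1) = ab.2 • Q.e s 1) := by
        intro s
        by_cases hs : 1 ≤ s ∧ s ≤ m
        · obtain ⟨h0, h1⟩ := hδ s hs.1 hs.2
          rw [Submodule.mem_span_singleton] at h0 h1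
          obtain ⟨a, ha⟩ := h0
          obtain ⟨b, hb⟩ := h1
          exact ⟨(a, b), fun _ _ => ⟨ha.symm, hb.symm⟩⟩
        · exact ⟨(0, 0), fun h1 h2 => absurd ⟨h1, h2⟩ hs⟩
      choose ab hab using hex
      set a : ℕ → ℂ := fun s => (ab s).1 with hadef
      set b : ℕ → ℂ := fun s => (ab s).2 with hbdef
      have ha : ∀ s, 1 ≤ s → s ≤ m → δ (Q.e s 0) = a s • Q.e s 0 :=
        fun s h1 h2 => (hab s h1 h2).1
      have hb : ∀ s, 1 ≤ s → s ≤ m → δ (Q.e s 1) = b s • Q.e s 1 :=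
        fun s h1 h2 => (hab s h1 h2).2
      have hμ := Q.mu_eq hn5 hm hrm hind δ a b ha hb
      set α0 : ℂ := (a 1 * ((n : ℂ) - 2) + 2 * b 1) / 2 with hα0
      set coef : Fin (m + 1) → ℂ :=
        fun i => if (i : ℕ) = 0 then α0 else -(a (i : ℕ)) / 2 with hcoef
      refine ⟨coef, ?_⟩
      set combo : LieDerivation ℂ N N := ∑ i : Fin (m + 1), coef i • τ (i : ℕ) with hcombo
      have hcombo_e : ∀ x : N,
          combo x = ∑ i : Fin (m + 1), coef i • (τ (i : ℕ) x) := by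
        intro x
        show QuasiQnFiliform.evalAt x combo = _
        rw [hcombo, map_sum]
        rfl
      have hc0 : ∀ s, 1 ≤ s → s ≤ m → combo (Q.e s 0) = a s • Q.e s 0 := by
        intro s h1 h2
        rw [hcombo_e (Q.e s 0)]
        rw [Finset.sum_eq_single (⟨s, by omega⟩ : Fin (m + 1))]
        · rw [hvali s s 0 (by omega) h1 h2 (by omega)]
          rw [smul_smul]
          congr 1
          · show coef ⟨s, by omega⟩ * γi s s 0 = a s
            rw [hcoef]
            simp only [if_neg (by omega : ¬ s = 0)]
            show -(a s) / 2 * γi s s 0 = a s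
            rw [hγi]
            simp only [if_pos rfl]
            norm_num
        · intro i _ his
          by_cases hi0 : (i : ℕ) = 0
          · have : τ (i : ℕ) (Q.e s 0) = 0 := by
              rw [hi0, hval0 s 0 h1 h2 (by omega)]
              simp [hγ₀]
            rw [this, smul_zero]
          · have hine : (i : ℕ) ≠ s := fun h => his (Fin.ext h)
            have : τ (i : ℕ) (Q.e s 0) = 0 := by
              rw [hvali (i : ℕ) s 0 hi0 h1 h2 (by omega),
                hγz (i : ℕ) s 0 (fun h => hine h.symm), zero_smul]
            rw [this, smul_zero]
        · intro hnot
          exact absurd (Finset.mem_univ _) hnot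
      have hc1 : ∀ s, 1 ≤ s → s ≤ m → combo (Q.e s 1) = b s • Q.e s 1 := by
        intro s h1 h2
        rw [hcombo_e (Q.e s 1)]
        have hsub : ({(0 : Fin (m + 1)), (⟨s, by omega⟩ : Fin (m + 1))} : Finset (Fin (m + 1)))
            ⊆ Finset.univ := Finset.subset_univ _
        rw [← Finset.sum_subset hsub ?h0]
        case h0 =>
          intro i _ hinot
          simp only [Finset.mem_insert, Finset.mem_singleton] at hinot
          push_neg at hinot
          obtain ⟨hi0', his'⟩ := hinot
          have hi0 : (i : ℕ) ≠ 0 := fun h => hi0' (Fin.ext h)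
          have hine : (i : ℕ) ≠ s := fun h => his' (Fin.ext h)
          have : τ (i : ℕ) (Q.e s 1) = 0 := by
            rw [hvali (i : ℕ) s 1 hi0 h1 h2 (by omega),
              hγz (i : ℕ) s 1 (fun h => hine h.symm), zero_smul]
          rw [this, smul_zero]
        rw [Finset.sum_insert (by
          simp only [Finset.mem_singleton]
          intro h
          have : (0 : ℕ) = s := congrArg Fin.val h
          omega), Finset.sum_singleton]
        simp only [Fin.val_zero]
        rw [hval0 s 1 h1 h2 (by omega), hvali s s 1 (by omega) h1 h2 (by omega)]
        have hγ01 : γ₀ s 1 = 1 := by simp [hγ₀]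
        have hγi1 : γi s s 1 = (n : ℂ) - 2 := by
          rw [hγi]
          simp only [if_pos rfl, if_neg (by omega : ¬ (1 : ℕ) = 0)]
          norm_num
        rw [hγ01, hγi1, smul_smul, smul_smul, ← add_smul]
        congr 1
        show coef 0 * 1 + coef ⟨s, by omega⟩ * ((n : ℂ) - 2) = b s
        rw [hcoef]
        simp only [Fin.val_zero, if_pos rfl, if_neg (by omega : ¬ s = 0)]
        show α0 * 1 + -(a s) / 2 * ((n : ℂ) - 2) = b s
        rw [hα0]
        linear_combination -(1 / 2 : ℂ) * (hμ s h1 h2)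
      -- conclude δ = combo
      have hvan := Q.vanish hn5 hrm (δ - combo) (fun s h1 h2 =>
        ⟨by rw [LieDerivation.sub_apply, ha s h1 h2, hc0 s h1 h2, sub_self],
         by rw [LieDerivation.sub_apply, hb s h1 h2, hc1 s h1 h2, sub_self]⟩)
      ext x
      have hx := hvan x
      rwa [LieDerivation.sub_apply, sub_eq_zero] at hx
    -- linear independence
    have hindep : LinearIndependent ℂ τ'' := by
      rw [Fintype.linearIndependent_iff]
      intro g hg
      have hg' : ∑ i : Fin (m + 1), g i • τ (i : ℕ) = 0 := by
        have := congrArg (TS.subtype) hg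
        rw [map_sum, map_zero] at this
        simpa using this
      have hgs : ∀ s (h1 : 1 ≤ s) (h2 : s ≤ m), g ⟨s, by omega⟩ = 0 := by
        intro s h1 h2
        have hev := congrArg (QuasiQnFiliform.evalAt (Q.e s 0)) hg'
        rw [map_sum, map_zero] at hev
        have hev' : ∑ i : Fin (m + 1), g i • (τ (i : ℕ) (Q.e s 0)) = 0 := hev
        rw [Finset.sum_eq_single (⟨s, by omega⟩ : Fin (m + 1))] at hev'
        · rw [hvali s s 0 (by omega) h1 h2 (by omega)] at hev'
          have hγ : γi s s 0 = -2 := by rw [hγi]; simp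
          rw [hγ, smul_smul] at hev'
          rcases smul_eq_zero.mp hev' with h | h
          · exact (mul_eq_zero.mp h).resolve_right (by norm_num)
          · exact absurd h (hne0 s h1 h2)
        · intro i _ his
          by_cases hi0 : (i : ℕ) = 0
          · have : τ (i : ℕ) (Q.e s 0) = 0 := by
              rw [hi0, hval0 s 0 h1 h2 (by omega)]
              simp [hγ₀]
            rw [this, smul_zero]
          · have hine : (i : ℕ) ≠ s := fun h => his (Fin.ext h)
            have : τ (i : ℕ) (Q.e s 0) = 0 := by
              rw [hvali (i : ℕ) s 0 hi0 h1 h2 (by omega),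
                hγz (i : ℕ) s 0 (fun h => hine h.symm), zero_smul]
            rw [this, smul_zero]
        · intro hnot
          exact absurd (Finset.mem_univ _) hnot
      have hg0 : g 0 = 0 := by
        have hev := congrArg (QuasiQnFiliform.evalAt (Q.e 1 1)) hg'
        rw [map_sum, map_zero] at hev
        have hev' : ∑ i : Fin (m + 1), g i • (τ (i : ℕ) (Q.e 1 1)) = 0 := hev
        rw [Finset.sum_eq_single (0 : Fin (m + 1))] at hev'
        · simp only [Fin.val_zero] at hev'
          rw [hval0 1 1 le_rfl hm (by omega)] at hev'
          have hγ : γ₀ 1 1 = 1 := by simp [hγ₀]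
          rw [hγ, one_smul] at hev'
          rcases smul_eq_zero.mp hev' with h | h
          · exact h
          · exact absurd h hne11
        · intro i _ hi0'
          have hi0 : (i : ℕ) ≠ 0 := fun h => hi0' (Fin.ext h)
          have him : (i : ℕ) ≤ m := by omega
          have : g i = 0 := by
            have := hgs (i : ℕ) (by omega) him
            have hieq : (⟨(i : ℕ), by omega⟩ : Fin (m + 1)) = i := Fin.ext rfl
            rwa [hieq] at this
          rw [this, zero_smul]
        · intro hnot
          exact absurd (Finset.mem_univ _) hnot
      intro i
      by_cases hi0 : (i : ℕ) = 0
      · have : i = 0 := Fin.ext hi0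
        rw [this]
        exact hg0
      · have him : (i : ℕ) ≤ m := by omega
        have := hgs (i : ℕ) (by omega) him
        have hieq : (⟨(i : ℕ), by omega⟩ : Fin (m + 1)) = i := Fin.ext rfl
        rwa [hieq] at this
    -- spanning in TS
    have hspan' : ⊤ ≤ Submodule.span ℂ (Set.range τ'') := by
      rintro ⟨δ, hδ⟩ -
      obtain ⟨coef, hcoefδ⟩ := hspan δ ((hmemTS δ).mp hδ)
      have heq : (⟨δ, hδ⟩ : TS) = ∑ i : Fin (m + 1), coef i • τ'' i := by
        apply Subtype.ext
        rw [Submodule.coe_sum]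
        simp only [SetLike.val_smul, hτ'']
        exact hcoefδ
      rw [heq]
      exact Submodule.sum_mem _ fun i _ =>
        Submodule.smul_mem _ _ (Submodule.subset_span ⟨i, rfl⟩)
    let bT : Module.Basis (Fin (m + 1)) ℂ TS := Module.Basis.mk hindep hspan'
    constructor
    · exact ⟨bT, fun i => by rw [Module.Basis.mk_apply]⟩
    · rw [Module.finrank_eq_card_basis bT, Fintype.card_fin]
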